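/- Let H : ℝⁿ → [0, ∞) and W : ℝⁿ → [0, ∞) be measurable, and for measurable g : ℝⁿ → [0, ∞] define (T g)(x) = ∫_{ℝⁿ} H(x − y) W(y) g(y) dy, with T^N the N-fold iterate. Let 0 < T₀ ≤ ∞ and let w : ℝⁿ × [0, T₀) → [0, ∞] be such that w(x, ·) is nondecreasing on [0, T₀) for each x, w(·, t) is measurable for each t, and w(x, t) ≤ ∫_0^t (T w(·, τ))(x) dτ for all x ∈ ℝⁿ and t ∈ [0, T₀). Then for every integer N ≥ 1, every x ∈ ℝⁿ, and every t ∈ [0, T₀): w(x, t) ≤ (t^N / N!) · (T^N w(·, t))(x). -/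

import Mathlib

open MeasureTheory ENNReal

/-- The convolution–multiplication operator
`(T g)(x) = ∫ H(x − y) W(y) g(y) dy` on nonnegative measurable functions. -/
noncomputable def convMul {n : ℕ} (H W : EuclideanSpace ℝ (Fin n) → ℝ)
    (g : EuclideanSpace ℝ (Fin n) → ℝ≥0∞) : EuclideanSpace ℝ (Fin n) → ℝ≥0∞ :=
  fun x => ∫⁻ y, ENNReal.ofReal (H (x - y) * W y) * g y

lemma convMul_mono {n : ℕ} (H W : EuclideanSpace ℝ (Fin n) → ℝ)
    (g g' : EuclideanSpace ℝ (Fin n) → ℝ≥0∞) (h : ∀ y, g y ≤ g' y) (x) :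
    convMul H W g x ≤ convMul H W g' x :=
  lintegral_mono fun y => mul_le_mul_right (h y) _

lemma convMul_iterate_mono {n : ℕ} (H W : EuclideanSpace ℝ (Fin n) → ℝ) (k : ℕ)
    (g g' : EuclideanSpace ℝ (Fin n) → ℝ≥0∞) (h : ∀ y, g y ≤ g' y) :
    ∀ x, (convMul H W)^[k] g x ≤ (convMul H W)^[k] g' x := by
  induction k with
  | zero => exact h
  | succ k ih =>
    intro x
    rw [Function.iterate_succ_apply', Function.iterate_succ_apply']
    exact convMul_mono _ _ _ _ ih x

lemma convMul_const_mul {n : ℕ} (H W : EuclideanSpace ℝ (Fin n) → ℝ)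
    (c : ℝ≥0∞) (hc : c ≠ ⊤) (g : EuclideanSpace ℝ (Fin n) → ℝ≥0∞) (x) :
    convMul H W (fun y => c * g y) x = c * convMul H W g x := by
  unfold convMul
  simp_rw [mul_left_comm]
  exact lintegral_const_mul' c _ hc

lemma lint_pow_fact (k : ℕ) (t : ℝ) (ht : 0 ≤ t) :
    ∫⁻ τ in Set.Ioc (0:ℝ) t, ENNReal.ofReal (τ ^ k / (Nat.factorial k : ℝ)) =
      ENNReal.ofReal (t ^ (k+1) / (Nat.factorial (k+1) : ℝ)) := by
  rw [← ofReal_integral_eq_lintegral_ofReal]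
  · congr 1
    rw [← intervalIntegral.integral_of_le ht]
    simp_rw [div_eq_mul_inv]
    rw [intervalIntegral.integral_mul_const, integral_pow]
    have hk : (Nat.factorial k : ℝ) ≠ 0 := Nat.cast_ne_zero.mpr (Nat.factorial_ne_zero k)
    have hk1 : ((k:ℝ) + 1) ≠ 0 := by positivity
    rw [Nat.factorial_succ]
    push_cast
    field_simp
    simp
  · exact (Continuous.integrableOn_Ioc (by continuity))
  · refine (ae_restrict_iff' measurableSet_Ioc).mpr (Filter.Eventually.of_forall ?_)
    intro τ hτ
    have := hτ.1
    positivity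

theorem gronwall_iteration (n : ℕ) (hn : 1 ≤ n)
    (H W : EuclideanSpace ℝ (Fin n) → ℝ)
    (hH0 : ∀ z, 0 ≤ H z) (hW0 : ∀ y, 0 ≤ W y)
    (hHmeas : Measurable H) (hWmeas : Measurable W)
    (T₀ : ℝ≥0∞) (hT₀ : 0 < T₀)
    (w : EuclideanSpace ℝ (Fin n) → ℝ → ℝ≥0∞)
    (hmono : ∀ x, ∀ s t : ℝ, 0 ≤ s → s ≤ t → ENNReal.ofReal t < T₀ → w x s ≤ w x t)
    (hmeas : ∀ t : ℝ, Measurable fun x => w x t)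
    (hgron : ∀ x, ∀ t : ℝ, 0 ≤ t → ENNReal.ofReal t < T₀ →
      w x t ≤ ∫⁻ τ in Set.Ioc (0 : ℝ) t, convMul H W (fun y => w y τ) x) :
    ∀ N : ℕ, 1 ≤ N → ∀ x, ∀ t : ℝ, 0 ≤ t → ENNReal.ofReal t < T₀ →
      w x t ≤ ENNReal.ofReal (t ^ N / (Nat.factorial N : ℝ)) *
        (convMul H W)^[N] (fun y => w y t) x := by
  have key : ∀ N : ℕ, ∀ x, ∀ t : ℝ, 0 ≤ t → ENNReal.ofReal t < T₀ →
      w x t ≤ ENNReal.ofReal (t ^ N / (Nat.factorial N : ℝ)) *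
        (convMul H W)^[N] (fun y => w y t) x := by
    intro N
    induction N with
    | zero => intro x t ht hlt; simp
    | succ k ih =>
      intro x t ht hlt
      set C := (convMul H W)^[k+1] (fun y => w y t) x with hC
      calc w x t ≤ ∫⁻ τ in Set.Ioc (0:ℝ) t, convMul H W (fun y => w y τ) x :=
            hgron x t ht hlt
        _ ≤ ∫⁻ τ in Set.Ioc (0:ℝ) t,
              ENNReal.ofReal (τ ^ k / (Nat.factorial k : ℝ)) * C := by
            refine setLIntegral_mono (((measurable_id.pow_const k).div_const _).ennreal_ofReal.mul_const C) ?_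
            intro τ hτ
            obtain ⟨hτ0, hτt⟩ := hτ
            have hτT : ENNReal.ofReal τ < T₀ :=
              lt_of_le_of_lt (ENNReal.ofReal_le_ofReal hτt) hlt
            calc convMul H W (fun y => w y τ) x
                ≤ convMul H W (fun y => ENNReal.ofReal (τ ^ k / (Nat.factorial k : ℝ)) *
                    (convMul H W)^[k] (fun y' => w y' τ) y) x :=
                  convMul_mono _ _ _ _ (fun y => ih y τ hτ0.le hτT) x
              _ = ENNReal.ofReal (τ ^ k / (Nat.factorial k : ℝ)) *
                    convMul H W ((convMul H W)^[k] (fun y' => w y' τ)) x :=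
                  convMul_const_mul _ _ _ ENNReal.ofReal_ne_top _ x
              _ = ENNReal.ofReal (τ ^ k / (Nat.factorial k : ℝ)) *
                    (convMul H W)^[k+1] (fun y' => w y' τ) x := by
                  rw [Function.iterate_succ_apply']
              _ ≤ ENNReal.ofReal (τ ^ k / (Nat.factorial k : ℝ)) * C := by
                  refine mul_le_mul_right ?_ _
                  exact convMul_iterate_mono _ _ _ _ _
                    (fun y => hmono y τ t hτ0.le hτt hlt) x
        _ = (∫⁻ τ in Set.Ioc (0:ℝ) t,
              ENNReal.ofReal (τ ^ k / (Nat.factorial k : ℝ))) * C :=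
            lintegral_mul_const _ ((measurable_id.pow_const k).div_const _).ennreal_ofReal
        _ = ENNReal.ofReal (t ^ (k+1) / (Nat.factorial (k+1) : ℝ)) * C := by
            rw [lint_pow_fact k t ht]
  intro N _ x t ht hlt
  exact key N x t ht hlt
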